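/- Let w be a cyclic word over the alphabet {0, 1, 2} with no two cyclically adjacent letters equal. Define T₂(w) to be the cyclic word obtained from w by: (a) keeping each occurrence of the letter 2 whose two cyclic neighbors are equal to each other; (b) deleting each occurrence of the letter 2 whose two cyclic neighbors are distinct from each other; and (c) inserting one letter 2 between every cyclically adjacent pair of letters both belonging to {0, 1} (such a pair necessarily consists of one 0 and one 1). Then T₂(w) again has no two cyclically adjacent letters equal, and T₂(T₂(w)) = w. -/

import Mathlib

/-- Cyclic access to a list entry. -/
def cget (w : List (Fin 3)) (i : ℕ) : Fin 3 := w.getD (i % w.length) 0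

/-- No two cyclically adjacent letters are equal. -/
def NoCycAdjEq (w : List (Fin 3)) : Prop :=
  ∀ i < w.length, cget w i ≠ cget w (i + 1)

/-- The contribution of a single letter `c` (with cyclic predecessor `p` and
successor `nx`) to the word `T₂(w)`:
(a) a letter `2` whose two cyclic neighbors are equal is kept;
(b) a letter `2` whose two cyclic neighbors are distinct is deleted;
(c) a letter in `{0,1}` is kept, and a `2` is inserted after it whenever the
next letter also lies in `{0,1}`. -/
def block (p c nx : Fin 3) : List (Fin 3) :=
  if c = 2 then (if p = nx then [2] else []) else c :: (if nx = 2 then [] else [2])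

/-- The cyclic word `T₂(w)`. -/
def T2 (w : List (Fin 3)) : List (Fin 3) :=
  ((List.range w.length).map
    (fun i => block (cget w (i + w.length - 1)) (cget w i) (cget w (i + 1)))).flatten

-- basic cget lemmas
lemma cget_mod (w : List (Fin 3)) (i : ℕ) : cget w (i % w.length) = cget w i := by
  simp [cget, Nat.mod_mod]

lemma cget_add_length (w : List (Fin 3)) (i : ℕ) : cget w (i + w.length) = cget w i := by
  simp [cget, Nat.add_mod_right]

lemma cget_rotate (w : List (Fin 3)) (n i : ℕ) (hw : w ≠ []) :
    cget (w.rotate n) i = cget w (i + n) := by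
  have hN : 0 < w.length := List.length_pos_iff.mpr hw
  have h2 : (i + n) % w.length < w.length := Nat.mod_lt _ hN
  have h1 : i % w.length < (w.rotate n).length := by
    rw [List.length_rotate]; exact Nat.mod_lt _ hN
  rw [cget, cget, List.length_rotate, List.getD_eq_getElem _ _ h1,
    List.getElem_rotate, List.getD_eq_getElem _ _ h2]
  simp only [Nat.mod_add_mod]

lemma noCyc_all {w : List (Fin 3)} (hw : NoCycAdjEq w) (i : ℕ) (hne : w ≠ []) :
    cget w i ≠ cget w (i + 1) := by
  have hN : 0 < w.length := List.length_pos_iff.mpr hne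
  have := hw (i % w.length) (Nat.mod_lt _ hN)
  simpa [cget, Nat.mod_mod, Nat.mod_add_mod] using this

def blk (w : List (Fin 3)) (i : ℕ) : List (Fin 3) :=
  block (cget w (i + w.length - 1)) (cget w i) (cget w (i + 1))

lemma T2_eq (w : List (Fin 3)) : T2 w = ((List.range w.length).map (blk w)).flatten := rfl

lemma blk_period (w : List (Fin 3)) (hw : w ≠ []) (j : ℕ) :
    blk w (j + w.length) = blk w j := by
  have hN : 0 < w.length := List.length_pos_iff.mpr hw
  unfold blk
  rw [show j + w.length + w.length - 1 = (j + w.length - 1) + w.length by omega,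
    show j + w.length + 1 = (j + 1) + w.length by omega,
    cget_add_length, cget_add_length, cget_add_length]

lemma blk_rotate1 (w : List (Fin 3)) (hw : w ≠ []) (i : ℕ) :
    blk (w.rotate 1) i = blk w (i + 1) := by
  have hN : 0 < w.length := List.length_pos_iff.mpr hw
  unfold blk
  rw [List.length_rotate, cget_rotate _ _ _ hw, cget_rotate _ _ _ hw, cget_rotate _ _ _ hw,
    show i + w.length - 1 + 1 = i + w.length by omega,
    show i + 1 + w.length - 1 = i + w.length by omega]

lemma T2_rotate1 (w : List (Fin 3)) : T2 (w.rotate 1) ~r T2 w := by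
  rcases eq_or_ne w [] with rfl | hw
  · exact List.IsRotated.refl _
  have hN : 0 < w.length := List.length_pos_iff.mpr hw
  obtain ⟨m, hm⟩ : ∃ m, w.length = m + 1 := ⟨w.length - 1, by omega⟩
  rw [T2_eq, T2_eq, List.length_rotate]
  have h1 : (List.range w.length).map (blk (w.rotate 1))
      = (List.range w.length).map (fun i => blk w (i + 1)) := by
    apply List.map_congr_left; intro i _; exact blk_rotate1 w hw i
  rw [h1, hm]
  have h2 : (List.range (m+1)).map (fun i => blk w (i + 1))
      = ((List.range m).map (fun i => blk w (i + 1))) ++ [blk w 0] := by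
    rw [List.range_succ, List.map_append]
    congr 1
    simp only [List.map_cons, List.map_nil]
    rw [← blk_period w hw 0, zero_add, hm]
  have h3 : (List.range (m+1)).map (blk w)
      = blk w 0 :: (List.range m).map (fun i => blk w (i + 1)) := by
    rw [List.range_succ_eq_map, List.map_cons, List.map_map]
    rfl
  rw [h2, h3, List.flatten_append, List.flatten_cons]
  simpa using List.isRotated_append

lemma T2_rotate (w : List (Fin 3)) (k : ℕ) : T2 (w.rotate k) ~r T2 w := by
  induction k with
  | zero => rw [List.rotate_zero]
  | succ k ih =>
      have : w.rotate (k+1) = (w.rotate k).rotate 1 := by rw [List.rotate_rotate]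
      rw [this]
      exact (T2_rotate1 _).trans ih

lemma T2_congr {w w' : List (Fin 3)} (h : w ~r w') : T2 w ~r T2 w' := by
  obtain ⟨k, rfl⟩ := h
  exact (T2_rotate w k).symm

lemma noCyc_rotate {w : List (Fin 3)} (hw : NoCycAdjEq w) (k : ℕ) :
    NoCycAdjEq (w.rotate k) := by
  rcases eq_or_ne w [] with rfl | hne
  · simpa using hw
  intro i _
  rw [cget_rotate _ _ _ hne, cget_rotate _ _ _ hne,
    show i + 1 + k = (i + k) + 1 by omega]
  exact noCyc_all hw _ hne

lemma noCyc_congr {w w' : List (Fin 3)} (h : w ~r w') (hw : NoCycAdjEq w) :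
    NoCycAdjEq w' := by
  obtain ⟨k, rfl⟩ := h
  exact noCyc_rotate hw k

/-! ### Syllable representation -/

def f3 (p : Fin 3 × Bool) : List (Fin 3) := p.1 :: (if p.2 then [2] else [])

def Fs (s : List (Fin 3 × Bool)) : List (Fin 3) := (s.map f3).flatten

def syl (s : List (Fin 3 × Bool)) (i : ℕ) : Fin 3 × Bool := s.getD i (0, false)

def sx (s : List (Fin 3 × Bool)) (i : ℕ) : Fin 3 := (syl s (i % s.length)).1

def sb (s : List (Fin 3 × Bool)) (i : ℕ) : Bool := (syl s (i % s.length)).2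

def lenS (s : List (Fin 3 × Bool)) (i : ℕ) : ℕ := (f3 (syl s i)).length

def off (s : List (Fin 3 × Bool)) (i : ℕ) : ℕ := ((s.take i).map f3).flatten.length

def ValidS (s : List (Fin 3 × Bool)) : Prop :=
  s ≠ [] ∧ (∀ i, sx s i ≠ 2) ∧ (∀ i, sb s i = false → sx s i ≠ sx s (i + 1))

def stepS (s : List (Fin 3 × Bool)) : List (Fin 3 × Bool) :=
  (List.range s.length).map (fun i => (sx s i, (sx s i == sx s (i + 1)) || !(sb s i)))

lemma lenS_eq (s : List (Fin 3 × Bool)) (i : ℕ) :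
    lenS s i = if (syl s i).2 then 2 else 1 := by
  cases h : (syl s i).2 <;> simp [lenS, f3, h]

lemma lenS_pos (s : List (Fin 3 × Bool)) (i : ℕ) : 0 < lenS s i := by
  rw [lenS_eq]; split <;> omega

lemma sx_mod (s : List (Fin 3 × Bool)) (i : ℕ) : sx s (i % s.length) = sx s i := by
  simp [sx, Nat.mod_mod]

lemma sx_mod_add (s : List (Fin 3 × Bool)) (i k : ℕ) :
    sx s (i % s.length + k) = sx s (i + k) := by
  simp [sx, Nat.mod_add_mod]

lemma sx_add_length (s : List (Fin 3 × Bool)) (i : ℕ) : sx s (i + s.length) = sx s i := by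
  simp [sx, Nat.add_mod_right]

lemma sb_mod (s : List (Fin 3 × Bool)) (i : ℕ) : sb s (i % s.length) = sb s i := by
  simp [sb, Nat.mod_mod]

lemma sx_lt (s : List (Fin 3 × Bool)) (i : ℕ) (h : i < s.length) : sx s i = (syl s i).1 := by
  rw [sx, Nat.mod_eq_of_lt h]

lemma sb_lt (s : List (Fin 3 × Bool)) (i : ℕ) (h : i < s.length) : sb s i = (syl s i).2 := by
  rw [sb, Nat.mod_eq_of_lt h]

lemma off_zero (s : List (Fin 3 × Bool)) : off s 0 = 0 := rfl

lemma off_succ (s : List (Fin 3 × Bool)) (i : ℕ) (h : i < s.length) :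
    off s (i + 1) = off s i + lenS s i := by
  have : syl s i = s[i] := List.getD_eq_getElem s _ h
  rw [off, off, List.take_succ, lenS, this]
  simp [h, List.getElem?_eq_getElem]

lemma off_total (s : List (Fin 3 × Bool)) : (Fs s).length = off s s.length := by
  simp [Fs, off]

lemma Fs_ne_nil (s : List (Fin 3 × Bool)) (h : s ≠ []) : Fs s ≠ [] := by
  cases s with
  | nil => exact absurd rfl h
  | cons p t => simp [Fs, f3]

lemma Fs_split (s : List (Fin 3 × Bool)) (i : ℕ) (h : i < s.length) :
    Fs s = ((s.take i).map f3).flatten ++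
      (f3 (syl s i) ++ ((s.drop (i + 1)).map f3).flatten) := by
  have hsyl : syl s i = s[i] := List.getD_eq_getElem s _ h
  conv_lhs => rw [Fs, ← List.take_append_drop i s, List.drop_eq_getElem_cons h]
  rw [List.map_append, List.flatten_append, List.map_cons, List.flatten_cons, hsyl]

lemma off_add_lt (s : List (Fin 3 × Bool)) (i : ℕ) (h : i < s.length) (t : ℕ)
    (ht : t < lenS s i) : off s i + t < (Fs s).length := by
  rw [Fs_split s i h]
  simp only [List.length_append]
  have : off s i = ((s.take i).map f3).flatten.length := rfl
  rw [← this, ← lenS]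
  omega

lemma cget_off (s : List (Fin 3 × Bool)) (i : ℕ) (h : i < s.length) (t : ℕ)
    (ht : t < lenS s i) :
    cget (Fs s) (off s i + t) = (f3 (syl s i)).getD t 0 := by
  have hlt := off_add_lt s i h t ht
  rw [cget, Nat.mod_eq_of_lt hlt]
  conv_lhs => rw [Fs_split s i h]
  have hoff : off s i = ((s.take i).map f3).flatten.length := rfl
  rw [hoff, List.getD_append_right _ _ _ _ (by omega), Nat.add_sub_cancel_left,
    List.getD_append _ _ _ _ ht]

lemma cget_off_x (s : List (Fin 3 × Bool)) (i : ℕ) (h : i < s.length) :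
    cget (Fs s) (off s i) = sx s i := by
  have := cget_off s i h 0 (lenS_pos s i)
  rw [Nat.add_zero] at this
  rw [this, sx_lt s i h, f3]
  rfl

lemma cget_off_2 (s : List (Fin 3 × Bool)) (i : ℕ) (h : i < s.length)
    (hb : (syl s i).2 = true) : cget (Fs s) (off s i + 1) = 2 := by
  have hlen : lenS s i = 2 := by rw [lenS_eq, hb]; rfl
  rw [cget_off s i h 1 (by omega), f3, hb]
  rfl

lemma cget_off_end (s : List (Fin 3 × Bool)) (hne : s ≠ []) (i : ℕ) (h : i < s.length) :
    cget (Fs s) (off s i + lenS s i) = sx s (i + 1) := by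
  have hn : 0 < s.length := List.length_pos_iff.mpr hne
  rcases Nat.lt_or_ge (i + 1) s.length with h1 | h1
  · rw [← off_succ s i h]
    have := cget_off s (i + 1) h1 0 (lenS_pos s (i + 1))
    rw [Nat.add_zero] at this
    rw [this, sx_lt s (i + 1) h1, f3]
    rfl
  · have hin : i + 1 = s.length := by omega
    rw [← off_succ s i h, hin, ← off_total, ← Nat.zero_add ((Fs s).length),
      cget_add_length]
    have h0 := cget_off_x s 0 hn
    rw [off_zero] at h0
    rw [h0, ← Nat.zero_add s.length, sx_add_length]

lemma cover (s : List (Fin 3 × Bool)) :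
    ∀ m, m ≤ s.length → ∀ j, j < off s m →
      ∃ i, i < m ∧ ∃ t, t < lenS s i ∧ j = off s i + t := by
  intro m
  induction m with
  | zero => intro _ j hj; rw [off_zero] at hj; omega
  | succ m ih =>
      intro hm j hj
      rcases Nat.lt_or_ge j (off s m) with h | h
      · obtain ⟨i, hi, t, ht, rfl⟩ := ih (by omega) j h
        exact ⟨i, by omega, t, ht, rfl⟩
      · refine ⟨m, by omega, j - off s m, ?_, by omega⟩
        rw [off_succ s m (by omega)] at hj
        omega

lemma range_off (s : List (Fin 3 × Bool)) :
    ∀ m, m ≤ s.length →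
      List.range (off s m) =
        ((List.range m).map (fun i => List.range' (off s i) (lenS s i))).flatten := by
  intro m
  induction m with
  | zero => intro _; rfl
  | succ m ih =>
      intro hm
      rw [off_succ s m (by omega), List.range_add, ih (by omega), List.range_succ,
        List.map_append, List.flatten_append]
      congr 1
      simp [List.range'_eq_map_range]

lemma flatten_map_flatten (g : ℕ → List (Fin 3)) (Ls : List (List ℕ)) :
    ((Ls.flatten).map g).flatten = (Ls.map (fun l => ((l.map g).flatten))).flatten := by
  induction Ls with
  | nil => rfl
  | cons l Ls ih =>
      rw [List.flatten_cons, List.map_append, List.flatten_append, ih, List.map_cons,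
        List.flatten_cons]

lemma T2_Fs (s : List (Fin 3 × Bool)) (hval : ValidS s) : T2 (Fs s) = Fs (stepS s) := by
  obtain ⟨hne, h2, h3⟩ := hval
  have hn : 0 < s.length := List.length_pos_iff.mpr hne
  have hwne : Fs s ≠ [] := Fs_ne_nil s hne
  have hN : 0 < (Fs s).length := List.length_pos_iff.mpr hwne
  rw [T2_eq, off_total, range_off s s.length le_rfl, flatten_map_flatten]
  have hFs : Fs (stepS s)
      = ((List.range s.length).map
          (fun i => f3 (sx s i, (sx s i == sx s (i + 1)) || !(sb s i)))).flatten := by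
    simp only [Fs, stepS, List.map_map]
    rfl
  rw [hFs, List.map_map]
  congr 1
  apply List.map_congr_left
  intro i hi
  rw [List.mem_range] at hi
  simp only [Function.comp_apply]
  have hend : cget (Fs s) (off s i + lenS s i) = sx s (i + 1) := cget_off_end s hne i hi
  by_cases hb : (syl s i).2 = true
  · -- a syllable x followed by a 2
    have hlen : lenS s i = 2 := by rw [lenS_eq, if_pos hb]
    have hr2 : List.range' (off s i) 2 = [off s i, off s i + 1] := rfl
    rw [hlen, hr2]
    have hx : cget (Fs s) (off s i) = sx s i := cget_off_x s i hi
    have h2c : cget (Fs s) (off s i + 1) = 2 := cget_off_2 s i hi hb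
    have hp : cget (Fs s) (off s i + 1 + (Fs s).length - 1) = sx s i := by
      rw [show off s i + 1 + (Fs s).length - 1 = off s i + (Fs s).length by omega,
        cget_add_length, hx]
    have hnx : cget (Fs s) (off s i + 1 + 1) = sx s (i + 1) := by
      rw [show off s i + 1 + 1 = off s i + lenS s i by omega, hend]
    simp only [List.map_cons, List.map_nil, List.flatten_cons, List.flatten_nil]
    rw [blk, blk, hx, h2c, hp, hnx]
    rw [block, block, if_neg (h2 i), if_pos rfl, if_pos rfl]
    have hsb : sb s i = true := by rw [sb_lt s i hi, hb]
    rw [hsb, f3]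
    by_cases hxx : sx s i = sx s (i + 1)
    · simp [hxx]
    · simp [hxx, Ne.symm]
  · -- a lone syllable x
    have hb' : (syl s i).2 = false := by simpa using hb
    have hlen : lenS s i = 1 := by rw [lenS_eq, hb']; rfl
    rw [hlen, List.range'_one]
    simp only [List.map_cons, List.map_nil, List.flatten_cons, List.flatten_nil,
      List.append_nil]
    have hx : cget (Fs s) (off s i) = sx s i := cget_off_x s i hi
    have hnx : cget (Fs s) (off s i + 1) = sx s (i + 1) := by
      rw [show off s i + 1 = off s i + lenS s i by omega, hend]
    rw [blk, hx, hnx, block, if_neg (h2 i), if_neg (h2 (i + 1))]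
    have hsb : sb s i = false := by rw [sb_lt s i hi, hb']
    rw [hsb, f3]
    simp

lemma noCyc_Fs (s : List (Fin 3 × Bool)) (hval : ValidS s) : NoCycAdjEq (Fs s) := by
  obtain ⟨hne, h2, h3⟩ := hval
  intro j hj
  rw [off_total] at hj
  obtain ⟨i, hi, t, ht, rfl⟩ := cover s s.length le_rfl j hj
  have hend : cget (Fs s) (off s i + lenS s i) = sx s (i + 1) := cget_off_end s hne i hi
  by_cases hb : (syl s i).2 = true
  · have hlen : lenS s i = 2 := by rw [lenS_eq, if_pos hb]
    have h2c : cget (Fs s) (off s i + 1) = 2 := cget_off_2 s i hi hb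
    have ht01 : t = 0 ∨ t = 1 := by omega
    rcases ht01 with rfl | rfl
    · rw [Nat.add_zero, cget_off_x s i hi, h2c]
      exact h2 i
    · rw [h2c, show off s i + 1 + 1 = off s i + lenS s i by omega, hend]
      exact fun h => h2 (i + 1) h.symm
  · have hb' : (syl s i).2 = false := by simpa using hb
    have hlen : lenS s i = 1 := by rw [lenS_eq, hb']; rfl
    have ht0 : t = 0 := by omega
    subst ht0
    rw [Nat.add_zero, cget_off_x s i hi, show off s i + 1 = off s i + lenS s i by omega, hend]
    exact h3 i (by rw [sb_lt s i hi, hb'])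

lemma valid_of_noCyc (s : List (Fin 3 × Bool)) (hne : s ≠ [])
    (h2 : ∀ i, sx s i ≠ 2) (hno : NoCycAdjEq (Fs s)) : ValidS s := by
  refine ⟨hne, h2, ?_⟩
  have hn : 0 < s.length := List.length_pos_iff.mpr hne
  have hwne : Fs s ≠ [] := Fs_ne_nil s hne
  intro i hb
  -- reduce to i < s.length
  set i' := i % s.length with hi'
  have hi : i' < s.length := Nat.mod_lt _ hn
  have hb2 : sb s i' = false := by rw [hi', sb_mod]; exact hb
  rw [show sx s i = sx s i' from (sx_mod s i).symm,
    show sx s (i + 1) = sx s (i' + 1) from (sx_mod_add s i 1).symm]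
  have hlen : lenS s i' = 1 := by
    rw [lenS_eq, show (syl s i').2 = false from by rw [← sb_lt s i' hi]; exact hb2]
    rfl
  have hx := cget_off_x s i' hi
  have hend := cget_off_end s hne i' hi
  rw [hlen] at hend
  rw [← hx, ← hend]
  exact noCyc_all hno _ hwne

lemma length_stepS (s : List (Fin 3 × Bool)) : (stepS s).length = s.length := by
  simp [stepS]

lemma syl_stepS (s : List (Fin 3 × Bool)) (i : ℕ) (h : i < s.length) :
    syl (stepS s) i = (sx s i, (sx s i == sx s (i + 1)) || !(sb s i)) := by
  rw [syl, stepS, List.getD_eq_getElem _ _ (by simpa using h)]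
  simp

lemma sx_stepS (s : List (Fin 3 × Bool)) (hne : s ≠ []) (i : ℕ) :
    sx (stepS s) i = sx s i := by
  have hn : 0 < s.length := List.length_pos_iff.mpr hne
  rw [sx, length_stepS, syl_stepS s _ (Nat.mod_lt _ hn), sx_mod]

lemma sb_stepS (s : List (Fin 3 × Bool)) (hne : s ≠ []) (i : ℕ) :
    sb (stepS s) i = ((sx s i == sx s (i + 1)) || !(sb s i)) := by
  have hn : 0 < s.length := List.length_pos_iff.mpr hne
  rw [sb, length_stepS, syl_stepS s _ (Nat.mod_lt _ hn)]
  rw [show ((sx s (i % s.length), (sx s (i % s.length) == sx s (i % s.length + 1))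
      || !(sb s (i % s.length))).2 : Bool)
    = ((sx s (i % s.length) == sx s (i % s.length + 1)) || !(sb s (i % s.length))) from rfl]
  rw [sx_mod, sx_mod_add, sb_mod]

lemma validS_stepS (s : List (Fin 3 × Bool)) (hval : ValidS s) : ValidS (stepS s) := by
  obtain ⟨hne, h2, h3⟩ := hval
  have hne' : stepS s ≠ [] := by
    intro h
    have := length_stepS s
    rw [h] at this
    exact hne (List.length_eq_zero_iff.mp this.symm)
  refine ⟨hne', ?_, ?_⟩
  · intro i; rw [sx_stepS s hne]; exact h2 i
  · intro i hb
    rw [sb_stepS s hne] at hb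
    rw [sx_stepS s hne, sx_stepS s hne]
    simp only [Bool.or_eq_false_iff] at hb
    exact fun h => by simp [h] at hb

lemma getElem_stepS (s : List (Fin 3 × Bool)) (i : ℕ) (h : i < (stepS s).length) :
    (stepS s)[i] = (sx s i, (sx s i == sx s (i + 1)) || !(sb s i)) := by
  simp only [stepS, List.getElem_map, List.getElem_range]

lemma stepS_stepS (s : List (Fin 3 × Bool)) (hval : ValidS s) : stepS (stepS s) = s := by
  obtain ⟨hne, h2, h3⟩ := hval
  apply List.ext_getElem
  · rw [length_stepS, length_stepS]
  intro i h1 h2'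
  rw [length_stepS, length_stepS] at h1
  rw [getElem_stepS, sx_stepS s hne, sx_stepS s hne, sb_stepS s hne]
  have : s[i] = (sx s i, sb s i) := by
    rw [sx_lt s i h1, sb_lt s i h1, syl, List.getD_eq_getElem _ _ h1]
  rw [this]
  by_cases hxx : sx s i = sx s (i + 1)
  · have hbt : sb s i = true := by
      cases h : sb s i
      · exact absurd hxx (h3 i h)
      · rfl
    simp [hxx, hbt]
  · have : (sx s i == sx s (i + 1)) = false := by simp [hxx]
    simp [this]

/-! ### Parsing a word into syllables -/

def parse : List (Fin 3) → List (Fin 3 × Bool)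
  | [] => []
  | [x] => [(x, false)]
  | x :: y :: rest => if y = 2 then (x, true) :: parse rest else (x, false) :: parse (y :: rest)
termination_by l => l.length

lemma Fs_nil : Fs [] = [] := rfl

lemma Fs_cons (p : Fin 3 × Bool) (s : List (Fin 3 × Bool)) : Fs (p :: s) = f3 p ++ Fs s := by
  simp [Fs]

lemma parse_spec : ∀ (v : List (Fin 3)), List.Chain' (· ≠ ·) v →
    (∀ x ∈ v.head?, x ≠ 2) → Fs (parse v) = v ∧ ∀ p ∈ parse v, p.1 ≠ 2 := by
  intro v
  induction v using parse.induct with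
  | case1 =>
      intro _ _
      rw [parse]
      exact ⟨rfl, by simp⟩
  | case2 x =>
      intro _ hh
      have hx : x ≠ 2 := hh x rfl
      rw [parse]
      refine ⟨by simp [Fs_cons, Fs_nil, f3], ?_⟩
      intro p hp
      simp at hp
      rw [hp]
      exact hx
  | case3 x rest ih =>
      intro hch hh
      have hx : x ≠ 2 := hh x rfl
      have hch' : List.Chain' (· ≠ ·) ((2 : Fin 3) :: rest) := hch.tail
      have hh' : ∀ z ∈ rest.head?, z ≠ 2 := by
        intro z hz
        cases rest with
        | nil => simp at hz
        | cons a t =>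
            simp at hz
            subst hz
            have : (2 : Fin 3) ≠ a := (List.isChain_cons_cons.mp hch').1
            exact fun h => this h.symm
      obtain ⟨ih1, ih2⟩ := ih hch'.tail hh'
      rw [parse, if_pos rfl]
      refine ⟨?_, ?_⟩
      · rw [Fs_cons, ih1, f3]
        rfl
      · intro p hp
        rcases List.mem_cons.mp hp with rfl | hp
        · exact hx
        · exact ih2 p hp
  | case4 x y rest hy ih =>
      intro hch hh
      have hx : x ≠ 2 := hh x rfl
      have hch' : List.Chain' (· ≠ ·) (y :: rest) := hch.tail
      obtain ⟨ih1, ih2⟩ := ih hch' (by intro z hz; simp at hz; subst hz; exact hy)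
      rw [parse, if_neg hy]
      refine ⟨?_, ?_⟩
      · rw [Fs_cons, ih1, f3]
        rfl
      · intro p hp
        rcases List.mem_cons.mp hp with rfl | hp
        · exact hx
        · exact ih2 p hp

lemma cget_lt (v : List (Fin 3)) (i : ℕ) (h : i < v.length) : cget v i = v.getD i 0 := by
  rw [cget, Nat.mod_eq_of_lt h]

lemma chain'_of_noCyc {v : List (Fin 3)} (hv : NoCycAdjEq v) : List.Chain' (· ≠ ·) v := by
  apply List.isChain_iff_getElem.mpr
  intro i h
  have h1 : i < v.length := by omega
  have h2 : i + 1 < v.length := by omega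
  have := hv i h1
  rw [cget_lt v i h1, cget_lt v (i + 1) h2, List.getD_eq_getElem _ _ h1,
    List.getD_eq_getElem _ _ h2] at this
  simpa using this

lemma exists_ne_two {w : List (Fin 3)} (hw : NoCycAdjEq w) (hne : w ≠ []) :
    ∃ j, cget w j ≠ 2 := by
  by_contra h
  push_neg at h
  have h0 := h 0
  have h1 := h 1
  exact noCyc_all hw 0 hne (by rw [h0, Nat.zero_add, h1])

lemma sx_ne2 (s : List (Fin 3 × Bool)) (hne : s ≠ []) (h : ∀ p ∈ s, p.1 ≠ 2) :
    ∀ i, sx s i ≠ 2 := by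
  intro i
  have hn : 0 < s.length := List.length_pos_iff.mpr hne
  have hk : i % s.length < s.length := Nat.mod_lt _ hn
  rw [sx, syl, List.getD_eq_getElem _ _ hk]
  exact h _ (List.getElem_mem hk)

theorem stmt_7 (w : List (Fin 3)) (hw : NoCycAdjEq w) :
    NoCycAdjEq (T2 w) ∧ T2 (T2 w) ~r w := by
  rcases eq_or_ne w [] with rfl | hne
  · refine ⟨?_, ?_⟩
    · intro i hi
      simp [T2] at hi
    · exact List.IsRotated.refl _
  · obtain ⟨j, hj⟩ := exists_ne_two hw hne
    set v := w.rotate j with hv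
    have hwv : w ~r v := ⟨j, rfl⟩
    have hvne : v ≠ [] := by
      intro h
      have hl : v.length = w.length := List.length_rotate _ _
      rw [h] at hl
      exact hne (List.length_eq_zero_iff.mp hl.symm)
    have hvno : NoCycAdjEq v := noCyc_rotate hw j
    have hvh : ∀ x ∈ v.head?, x ≠ 2 := by
      have hc : cget v 0 = cget w j := by
        rw [hv, cget_rotate w j 0 hne, Nat.zero_add]
      cases hvv : v with
      | nil => exact absurd hvv hvne
      | cons a t =>
          intro x hx
          have hxa : a = x := by simpa using hx
          rw [← hxa]
          rw [hvv] at hc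
          have h0 : cget (a :: t) 0 = a := by rw [cget, Nat.zero_mod]; rfl
          rw [h0] at hc
          rw [hc]
          exact hj
    obtain ⟨hFs, hp2⟩ := parse_spec v (chain'_of_noCyc hvno) hvh
    have hsne : parse v ≠ [] := fun h => hvne (by rw [← hFs, h, Fs_nil])
    have hval : ValidS (parse v) :=
      valid_of_noCyc _ hsne (sx_ne2 _ hsne hp2) (by rw [hFs]; exact hvno)
    have hval' := validS_stepS _ hval
    have key : T2 v = Fs (stepS (parse v)) := by
      conv_lhs => rw [← hFs]
      exact T2_Fs _ hval
    refine ⟨?_, ?_⟩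
    · have h1 : T2 w ~r T2 v := T2_congr hwv
      have h2 : NoCycAdjEq (T2 v) := by rw [key]; exact noCyc_Fs _ hval'
      exact noCyc_congr h1.symm h2
    · have h2 : T2 (T2 w) ~r T2 (T2 v) := T2_congr (T2_congr hwv)
      have h3 : T2 (T2 v) = v := by rw [key, T2_Fs _ hval', stepS_stepS _ hval, hFs]
      rw [h3] at h2
      exact h2.trans hwv.symm
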